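/- Let X be a separable Banach space, (x_n) a dense sequence in its unit ball, and T : ℓ₂ → X defined by T((a_n)) = Σ_n a_n x_n / 2ⁿ. Let ‖·‖_s be the equivalent norm on X whose unit ball is V = B_X + T(B_{ℓ₂}). Then: (i) V is closed, bounded, balanced and convex with nonempty interior; (ii) the dual norm satisfies ‖f‖_s = ‖f‖ + ‖T* f‖₂ for all f ∈ X*; (iii) the set of norm-attaining functionals satisfies NA(X, ‖·‖_s) = NA(X, ‖·‖); (iv) (X, ‖·‖_s)* is strictly convex, hence (X, ‖·‖_s) is smooth. -/

import Mathlib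

open Filter Topology NormedSpace ENNReal Pointwise Metric Set



lemma dgsr_sSup_ball {E : Type*} [NormedAddCommGroup E] [NormedSpace ℝ E] (f : E →L[ℝ] ℝ) :
    sSup (f '' Metric.closedBall 0 1) = ‖f‖ := by
  have hne : (Metric.closedBall (0:E) 1).Nonempty := Metric.nonempty_closedBall.2 zero_le_one
  have hbdd : ∀ y ∈ f '' Metric.closedBall 0 1, y ≤ ‖f‖ := by
    rintro - ⟨x, hx, rfl⟩
    calc f x ≤ ‖f x‖ := le_abs_self _
    _ ≤ ‖f‖ := f.unit_le_opNorm x (mem_closedBall_zero_iff.1 hx)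
  refine le_antisymm (csSup_le (hne.image _) hbdd) ?_
  rw [← f.sSup_unitClosedBall_eq_norm]
  refine csSup_le (hne.image _) ?_
  rintro - ⟨x, hx, rfl⟩
  rcases le_or_gt 0 (f x) with h | h
  · show ‖f x‖ ≤ _
    rw [Real.norm_eq_abs, abs_of_nonneg h]
    exact le_csSup ⟨‖f‖, hbdd⟩ ⟨x, hx, rfl⟩
  · show ‖f x‖ ≤ _
    rw [Real.norm_eq_abs, abs_of_neg h]
    refine le_csSup ⟨‖f‖, hbdd⟩ ⟨-x, ?_, by simp⟩
    simpa using hx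


lemma dgsr_single {X : Type*} [NormedAddCommGroup X] [NormedSpace ℝ X]
    (xseq : ℕ → X) (T : lp (fun _ : ℕ => ℝ) 2 →L[ℝ] X)
    (hT : ∀ a : lp (fun _ : ℕ => ℝ) 2, T a = ∑' n, (((2 : ℝ) ^ (n + 1))⁻¹ * a n) • xseq n)
    (n : ℕ) :
    T (lp.single 2 n (1:ℝ)) = ((2:ℝ)^(n+1))⁻¹ • xseq n := by
  rw [hT, tsum_eq_single n ?_]
  · rw [lp.single_apply_self]
    simp
  · intro m hm
    rw [lp.single_apply_ne 2 n _ hm]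
    simp

lemma dgsr_inj {X : Type*} [NormedAddCommGroup X] [NormedSpace ℝ X]
    (xseq : ℕ → X)
    (hxdense : ∀ y : X, ‖y‖ ≤ 1 → ∀ ε > 0, ∃ n, ‖y - xseq n‖ < ε)
    (T : lp (fun _ : ℕ => ℝ) 2 →L[ℝ] X)
    (hT : ∀ a : lp (fun _ : ℕ => ℝ) 2, T a = ∑' n, (((2 : ℝ) ^ (n + 1))⁻¹ * a n) • xseq n)
    (f : X →L[ℝ] ℝ) (hf : f.comp T = 0) : f = 0 := by
  have hxn : ∀ n, f (xseq n) = 0 := by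
    intro n
    have h0 : f (T (lp.single 2 n (1:ℝ))) = 0 := by
      have : f.comp T (lp.single 2 n (1:ℝ)) = 0 := by rw [hf]; rfl
      simpa using this
    rw [dgsr_single xseq T hT n] at h0
    have h2 : ((2:ℝ)^(n+1))⁻¹ ≠ 0 := by positivity
    simpa [map_smul, smul_eq_mul, h2] using h0
  have hball : ∀ y : X, ‖y‖ ≤ 1 → f y = 0 := by
    intro y hy
    by_contra hne0
    have hdpos : 0 < |f y| := abs_pos.2 hne0
    obtain ⟨n, hn⟩ := hxdense y hy (|f y| / (‖f‖ + 1)) (by positivity)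
    have h1 : |f y| = |f (y - xseq n)| := by rw [map_sub, hxn n, sub_zero]
    have h2 : |f (y - xseq n)| ≤ ‖f‖ * ‖y - xseq n‖ := f.le_opNorm _
    have h3 : ‖f‖ * ‖y - xseq n‖ ≤ ‖f‖ * (|f y| / (‖f‖ + 1)) :=
      mul_le_mul_of_nonneg_left hn.le (norm_nonneg f)
    have h4 : (0:ℝ) < ‖f‖ + 1 := by positivity
    have h6 : |f y| ≤ ‖f‖ * (|f y| / (‖f‖ + 1)) := h1.le.trans (h2.trans h3)
    have h7 := mul_le_mul_of_nonneg_right h6 h4.le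
    have h8 : ‖f‖ * (|f y| / (‖f‖ + 1)) * (‖f‖ + 1) = ‖f‖ * |f y| := by field_simp
    rw [h8] at h7
    nlinarith
  ext x
  rcases eq_or_ne x 0 with rfl | hx0
  · simp
  · have h1 : ‖(‖x‖⁻¹ • x)‖ ≤ 1 := by
      rw [norm_smul, norm_inv, norm_norm, inv_mul_cancel₀ (norm_ne_zero_iff.2 hx0)]
    have := hball _ h1
    rw [map_smul, smul_eq_mul] at this
    rcases mul_eq_zero.1 this with h | h
    · exact absurd h (by simpa using norm_ne_zero_iff.2 hx0)
    · simpa using h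


lemma dgsr_summable_geom : Summable (fun n : ℕ => ((2:ℝ)^(n+1))⁻¹) := by
  have h : Summable (fun n : ℕ => ((1:ℝ)/2) * (1/2)^n) :=
    (summable_geometric_two).mul_left _
  refine h.congr fun n => ?_
  rw [← pow_succ']
  simp [div_pow, one_div]

lemma dgsr_compact {X : Type*} [NormedAddCommGroup X] [NormedSpace ℝ X] [CompleteSpace X]
    (xseq : ℕ → X) (hxb : ∀ n, ‖xseq n‖ ≤ 1)
    (T : lp (fun _ : ℕ => ℝ) 2 →L[ℝ] X)
    (hT : ∀ a : lp (fun _ : ℕ => ℝ) 2, T a = ∑' n, (((2 : ℝ) ^ (n + 1))⁻¹ * a n) • xseq n) :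
    IsCompact (T '' Metric.closedBall 0 1) := by
  classical
  have hconv : ∀ x : ℝ, ‖x‖ ^ (2:ℝ≥0∞).toReal = x^2 := by
    intro x
    rw [ENNReal.toReal_ofNat, show ((2:ℝ)) = ((2:ℕ):ℝ) by norm_num, Real.rpow_natCast]
    simp [Real.norm_eq_abs, sq_abs]
  set K : Set (ℕ → ℝ) := {c | ∀ N : ℕ, ∑ n ∈ Finset.range N, (c n)^2 ≤ 1} with hKdef
  have hKone : ∀ c ∈ K, ∀ n, |c n| ≤ 1 := by
    intro c hc n
    have h1 : (c n)^2 ≤ ∑ m ∈ Finset.range (n+1), (c m)^2 :=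
      Finset.single_le_sum (fun m _ => sq_nonneg (c m)) (Finset.self_mem_range_succ n)
    have h2 := hc (n+1)
    nlinarith [sq_abs (c n), abs_nonneg (c n)]
  have hKIcc : K ⊆ Set.pi Set.univ (fun _ : ℕ => Set.Icc (-1:ℝ) 1) := by
    intro c hc n _
    exact abs_le.mp (hKone c hc n)
  have hKclosed : IsClosed K := by
    have : K = ⋂ N : ℕ, {c : ℕ → ℝ | ∑ n ∈ Finset.range N, (c n)^2 ≤ 1} := by
      ext c; simp [hKdef, Set.mem_iInter]
    rw [this]
    exact isClosed_iInter fun N =>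
      isClosed_le (by exact continuous_finset_sum _ fun n _ => (continuous_apply n).pow 2)
        continuous_const
  have hKcomp : IsCompact K :=
    IsCompact.of_isClosed_subset (isCompact_univ_pi fun _ => isCompact_Icc) hKclosed hKIcc
  set g : ℕ → (ℕ → ℝ) → X := fun n c => (((2:ℝ)^(n+1))⁻¹ * c n) • xseq n with hgdef
  set Φ : (ℕ → ℝ) → X := fun c => ∑' n, g n c with hΦdef
  have hbound : ∀ (n : ℕ) (c : ℕ → ℝ), c ∈ K → ‖g n c‖ ≤ ((2:ℝ)^(n+1))⁻¹ := by
    intro n c hc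
    rw [hgdef]
    simp only [norm_smul, Real.norm_eq_abs, abs_mul]
    rw [abs_of_nonneg (by positivity : (0:ℝ) ≤ ((2:ℝ)^(n+1))⁻¹)]
    calc ((2:ℝ)^(n+1))⁻¹ * |c n| * ‖xseq n‖ ≤ ((2:ℝ)^(n+1))⁻¹ * 1 * 1 := by
          gcongr
          · exact hKone c hc n
          · exact hxb n
    _ = ((2:ℝ)^(n+1))⁻¹ := by ring
  have hΦcont : ContinuousOn Φ K := by
    have hunif := tendstoUniformlyOn_tsum_nat dgsr_summable_geom hbound
    refine hunif.continuousOn (Filter.Frequently.of_forall fun N => ?_)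
    exact (continuous_finset_sum _ fun n _ =>
      ((continuous_const.mul (continuous_apply n)).smul continuous_const)).continuousOn
  have himg : T '' Metric.closedBall 0 1 = Φ '' K := by
    ext y
    constructor
    · rintro ⟨a, ha, rfl⟩
      have hanorm : ‖a‖ ≤ 1 := mem_closedBall_zero_iff.1 ha
      refine ⟨fun n => a n, ?_, ?_⟩
      · intro N
        have h2 : ∑ n ∈ Finset.range N, ‖a n‖ ^ (2:ℝ≥0∞).toReal ≤ ‖a‖ ^ (2:ℝ≥0∞).toReal :=
          lp.sum_rpow_le_norm_rpow (by norm_num) a (Finset.range N)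
        simp only [hconv] at h2
        refine h2.trans ?_
        have h3 : ‖a‖ ^ (2:ℝ≥0∞).toReal ≤ 1 := by
          rw [ENNReal.toReal_ofNat]
          calc ‖a‖ ^ (2:ℝ) ≤ 1 ^ (2:ℝ) := Real.rpow_le_rpow (norm_nonneg a) hanorm (by norm_num)
          _ = 1 := Real.one_rpow _
        exact h3
      · rw [hT]
    · rintro ⟨c, hc, rfl⟩
      have hsq : Summable (fun n => ‖c n‖ ^ (2:ℝ≥0∞).toReal) := by
        have : Summable (fun n => (c n)^2) :=
          summable_of_sum_range_le (fun n => sq_nonneg _) hc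
        exact this.congr fun n => (hconv (c n)).symm
      have hmem : Memℓp c 2 := memℓp_gen hsq
      refine ⟨⟨c, hmem⟩, ?_, ?_⟩
      · rw [mem_closedBall_zero_iff]
        refine lp.norm_le_of_tsum_le (by norm_num) zero_le_one ?_
        have : ∑' n, ‖c n‖ ^ (2:ℝ≥0∞).toReal = ∑' n, (c n)^2 := by
          congr 1; ext n; exact hconv (c n)
        rw [this]
        calc ∑' n, (c n)^2 ≤ 1 := Summable.tsum_le_of_sum_range_le
              (summable_of_sum_range_le (fun n => sq_nonneg _) hc) hc
        _ = (1:ℝ) ^ (2:ℝ≥0∞).toReal := by simp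
      · rw [hT]
  rw [himg]
  exact hKcomp.image_of_continuousOn hΦcont


set_option maxHeartbeats 1000000 in
/-- Debs–Godefroy–Saint Raymond renorming lemma.  Let `X` be a separable Banach space,
`(xseq n)` a dense sequence in its unit ball, and `T : ℓ₂ → X` the bounded operator
`T a = ∑ₙ 2^{-(n+1)} (a n) • xseq n`.  Let `‖·‖ₛ` be the equivalent norm on `X` whose
unit ball is `V = B_X + T(B_{ℓ₂})`; its dual norm is `f ↦ sSup (f '' V)`.  Then:
(i) `V` is closed, bounded, balanced and convex with nonempty interior;
(ii) the dual norm satisfies `sSup (f '' V) = ‖f‖ + ‖T* f‖` for all `f ∈ X*`;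
(iii) a functional attains its maximum on `V` iff it attains its norm on `B_X`, i.e.
`NA(X, ‖·‖ₛ) = NA(X, ‖·‖)`;
(iv) the dual norm is strictly convex, hence `(X, ‖·‖ₛ)` is smooth (each point of the
boundary of `V` has a unique supporting functional normalized for the new norm). -/
theorem smooth_renorming_preserving_norm_attaining
    (X : Type*) [NormedAddCommGroup X] [NormedSpace ℝ X] [CompleteSpace X]
    (xseq : ℕ → X) (hxb : ∀ n, ‖xseq n‖ ≤ 1)
    (hxdense : ∀ y : X, ‖y‖ ≤ 1 → ∀ ε > 0, ∃ n, ‖y - xseq n‖ < ε)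
    (T : lp (fun _ : ℕ => ℝ) 2 →L[ℝ] X)
    (hT : ∀ a : lp (fun _ : ℕ => ℝ) 2, T a = ∑' n, (((2 : ℝ) ^ (n + 1))⁻¹ * a n) • xseq n) :
    letI V : Set X := Metric.closedBall (0 : X) 1 + T '' Metric.closedBall 0 1
    (IsClosed V ∧ Bornology.IsBounded V ∧ Balanced ℝ V ∧ Convex ℝ V ∧
      (interior V).Nonempty) ∧
    (∀ f : StrongDual ℝ X, sSup (f '' V) = ‖f‖ + ‖f.comp T‖) ∧
    (∀ f : StrongDual ℝ X,
      (∃ z ∈ V, ∀ w ∈ V, f w ≤ f z) ↔ (∃ x : X, ‖x‖ ≤ 1 ∧ f x = ‖f‖)) ∧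
    ((∀ f g : StrongDual ℝ X, sSup (f '' V) = 1 → sSup (g '' V) = 1 → f ≠ g →
        sSup ((f + g) '' V) < 2) ∧
      (∀ x ∈ V, x ∉ interior V →
        ∃! f : StrongDual ℝ X, sSup (f '' V) = 1 ∧ f x = 1)) := by
  classical
  set B : Set X := Metric.closedBall (0 : X) 1 with hB
  set C : Set X := T '' Metric.closedBall 0 1 with hC
  -- (i)
  have hCcomp : IsCompact C := dgsr_compact xseq hxb T hT
  have hBclosed : IsClosed B := Metric.isClosed_closedBall
  have hVclosed : IsClosed (B + C) := hBclosed.add_right_of_isCompact hCcomp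
  have hVbounded : Bornology.IsBounded (B + C) :=
    (Metric.isBounded_closedBall).add hCcomp.isBounded
  have hBbal : Balanced ℝ B := by
    intro a ha
    rintro - ⟨y, hy, rfl⟩
    rw [hB, Metric.mem_closedBall, dist_zero_right] at hy ⊢
    rw [norm_smul]
    have ha' : ‖a‖ ≤ 1 := by simpa using ha
    nlinarith [norm_nonneg y, norm_nonneg a]
  have hCbal : Balanced ℝ C := by
    intro a ha
    rintro - ⟨z, ⟨b, hb, rfl⟩, rfl⟩
    refine ⟨a • b, ?_, T.map_smul a b⟩
    rw [Metric.mem_closedBall, dist_zero_right] at hb ⊢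
    rw [norm_smul]
    have ha' : ‖a‖ ≤ 1 := by simpa using ha
    nlinarith [norm_nonneg b, norm_nonneg a]
  have hVbal : Balanced ℝ (B + C) := hBbal.add hCbal
  have hCconv : Convex ℝ C := by
    rw [hC]
    exact (convex_closedBall _ _).is_linear_image ⟨T.map_add, T.map_smul⟩
  have hVconv : Convex ℝ (B + C) := (convex_closedBall _ _).add hCconv
  have hball_sub : Metric.ball (0:X) 1 ⊆ B + C := by
    intro y hy
    have h1 : y ∈ B := Metric.ball_subset_closedBall hy
    have h2 : T 0 ∈ C := ⟨0, Metric.mem_closedBall_self zero_le_one, rfl⟩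
    have h3 := Set.add_mem_add h1 h2
    simpa using h3
  have hint : (interior (B + C)).Nonempty :=
    ⟨0, interior_maximal hball_sub Metric.isOpen_ball (Metric.mem_ball_self one_pos)⟩
  have hVne : (B + C).Nonempty := ⟨0, hball_sub (Metric.mem_ball_self one_pos)⟩
  -- (ii)
  have hII : ∀ f : StrongDual ℝ X, sSup (f '' (B + C)) = ‖f‖ + ‖f.comp T‖ := by
    intro f
    have h1 : f '' C = (f.comp T) '' Metric.closedBall 0 1 := by
      rw [hC, Set.image_image]; rfl
    have hBne : (f '' B).Nonempty :=
      ((Metric.nonempty_closedBall.2 zero_le_one).image _)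
    have hCne : (f '' C).Nonempty := by
      rw [h1]; exact (Metric.nonempty_closedBall.2 zero_le_one).image _
    have hBbdd : BddAbove (f '' B) := by
      refine ⟨‖f‖, ?_⟩
      rintro - ⟨x, hx, rfl⟩
      exact (le_abs_self _).trans (f.unit_le_opNorm x (mem_closedBall_zero_iff.1 hx))
    have hCbdd : BddAbove (f '' C) := by
      rw [h1]
      refine ⟨‖f.comp T‖, ?_⟩
      rintro - ⟨b, hb, rfl⟩
      exact (le_abs_self _).trans ((f.comp T).unit_le_opNorm b (mem_closedBall_zero_iff.1 hb))
    rw [Set.image_add f, csSup_add hBne hBbdd hCne hCbdd, h1,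
      dgsr_sSup_ball (f.comp T)]
    congr 1
    exact dgsr_sSup_ball f
  -- upper bound helper
  have hble : ∀ f : StrongDual ℝ X, ∀ w ∈ B + C, f w ≤ ‖f‖ + ‖f.comp T‖ := by
    intro f w hw
    rcases Set.mem_add.mp hw with ⟨u, hu, z, ⟨b, hb, rfl⟩, rfl⟩
    rw [map_add]
    have h1 : f u ≤ ‖f‖ :=
      (le_abs_self _).trans (f.unit_le_opNorm u (mem_closedBall_zero_iff.1 hu))
    have h2 : f (T b) ≤ ‖f.comp T‖ :=
      (le_abs_self _).trans ((f.comp T).unit_le_opNorm b (mem_closedBall_zero_iff.1 hb))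
    linarith
  have hVbdd : ∀ f : StrongDual ℝ X, BddAbove (f '' (B + C)) := by
    intro f
    refine ⟨‖f‖ + ‖f.comp T‖, ?_⟩
    rintro - ⟨w, hw, rfl⟩
    exact hble f w hw
  -- (iii)
  have hIII : ∀ f : StrongDual ℝ X,
      (∃ z ∈ B + C, ∀ w ∈ B + C, f w ≤ f z) ↔ (∃ x : X, ‖x‖ ≤ 1 ∧ f x = ‖f‖) := by
    intro f
    constructor
    · rintro ⟨z, hz, hmax⟩
      have hsup : f z = ‖f‖ + ‖f.comp T‖ := by
        rw [← hII f]
        refine le_antisymm (le_csSup (hVbdd f) ⟨z, hz, rfl⟩) (csSup_le (hVne.image _) ?_)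
        rintro - ⟨w, hw, rfl⟩
        exact hmax w hw
      rcases Set.mem_add.mp hz with ⟨u, hu, z', ⟨b, hb, rfl⟩, heq⟩
      have h1 : f u ≤ ‖f‖ :=
        (le_abs_self _).trans (f.unit_le_opNorm u (mem_closedBall_zero_iff.1 hu))
      have h2 : f (T b) ≤ ‖f.comp T‖ :=
        (le_abs_self _).trans ((f.comp T).unit_le_opNorm b (mem_closedBall_zero_iff.1 hb))
      have h3 : f u + f (T b) = ‖f‖ + ‖f.comp T‖ := by
        rw [← map_add, heq, hsup]
      exact ⟨u, mem_closedBall_zero_iff.1 hu, by linarith⟩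
    · rintro ⟨x, hx, hfx⟩
      obtain ⟨b, hb, hgb⟩ : ∃ b : lp (fun _ : ℕ => ℝ) 2, ‖b‖ ≤ 1 ∧ (f.comp T) b = ‖f.comp T‖ := by
        by_cases hg : f.comp T = 0
        · exact ⟨0, by simp, by simp [hg]⟩
        · set y := (InnerProductSpace.toDual ℝ (lp (fun _ : ℕ => ℝ) 2)).symm (f.comp T) with hy
          have hy0 : y ≠ 0 := by
            intro h
            apply hg
            have := congrArg (InnerProductSpace.toDual ℝ (lp (fun _ : ℕ => ℝ) 2)) h
            simpa [hy] using this
          have hynorm : ‖y‖ = ‖f.comp T‖ := by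
            rw [hy]; exact LinearIsometryEquiv.norm_map _ _
          refine ⟨‖y‖⁻¹ • y, ?_, ?_⟩
          · rw [norm_smul, norm_inv, norm_norm, inv_mul_cancel₀ (norm_ne_zero_iff.2 hy0)]
          · have h1 : (f.comp T) (‖y‖⁻¹ • y) = inner ℝ y (‖y‖⁻¹ • y) := by
              rw [hy, InnerProductSpace.toDual_symm_apply]
            rw [h1, real_inner_smul_right, real_inner_self_eq_norm_sq, ← hynorm]
            have : ‖y‖ ≠ 0 := norm_ne_zero_iff.2 hy0
            field_simp
      refine ⟨x + T b,
        Set.add_mem_add (mem_closedBall_zero_iff.2 hx) ⟨b, mem_closedBall_zero_iff.2 hb, rfl⟩, ?_⟩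
      intro w hw
      rw [map_add, hfx]
      have h4 : f (T b) = ‖f.comp T‖ := hgb
      rw [h4]
      exact hble f w hw
  -- (iv) strict convexity
  have hSC : ∀ f g : StrongDual ℝ X, sSup (f '' (B + C)) = 1 → sSup (g '' (B + C)) = 1 → f ≠ g →
      sSup ((f + g) '' (B + C)) < 2 := by
    intro f g hf1 hg1 hne
    rw [hII f] at hf1
    rw [hII g] at hg1
    rw [hII (f + g)]
    by_contra hlt
    push_neg at hlt
    have hcomp : (f + g).comp T = f.comp T + g.comp T := by
      ext b; simp
    have h1 : ‖f + g‖ ≤ ‖f‖ + ‖g‖ := norm_add_le f g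
    have h2 : ‖(f + g).comp T‖ ≤ ‖f.comp T‖ + ‖g.comp T‖ := by
      rw [hcomp]; exact norm_add_le _ _
    have heqT : ‖f.comp T + g.comp T‖ = ‖f.comp T‖ + ‖g.comp T‖ := by
      rw [← hcomp]; linarith
    set ι := (InnerProductSpace.toDual ℝ (lp (fun _ : ℕ => ℝ) 2)).symm with hι
    set u := ι (f.comp T) with hu
    set v := ι (g.comp T) with hv
    have huv : ‖u + v‖ = ‖u‖ + ‖v‖ := by
      have e : u + v = ι (f.comp T + g.comp T) := (map_add ι _ _).symm
      rw [e, LinearIsometryEquiv.norm_map, heqT, hu, hv,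
        LinearIsometryEquiv.norm_map, LinearIsometryEquiv.norm_map]
    have hray : SameRay ℝ u v := sameRay_iff_norm_add.mpr huv
    rcases hray with h | h | ⟨r, s, hr, hs, hrs⟩
    · have hfT : f.comp T = 0 := by
        have := congrArg (InnerProductSpace.toDual ℝ (lp (fun _ : ℕ => ℝ) 2)) h
        simpa [hu, hι] using this
      have hf0 : f = 0 := dgsr_inj xseq hxdense T hT f hfT
      rw [hf0] at hf1
      simp at hf1
    · have hgT : g.comp T = 0 := by
        have := congrArg (InnerProductSpace.toDual ℝ (lp (fun _ : ℕ => ℝ) 2)) h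
        simpa [hv, hι] using this
      have hg0 : g = 0 := dgsr_inj xseq hxdense T hT g hgT
      rw [hg0] at hg1
      simp at hg1
    · have h5 : r • f.comp T = s • g.comp T := by
        have := congrArg (InnerProductSpace.toDual ℝ (lp (fun _ : ℕ => ℝ) 2)) hrs
        simpa [hu, hv, hι, map_smulₛₗ, starRingEnd_apply, star_trivial] using this
      have h6 : ((r • f) - (s • g)).comp T = 0 := by
        rw [ContinuousLinearMap.sub_comp, ContinuousLinearMap.smul_comp,
          ContinuousLinearMap.smul_comp, h5, sub_self]
      have h7 : r • f = s • g := by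
        have := dgsr_inj xseq hxdense T hT _ h6
        rwa [sub_eq_zero] at this
      have e1 : r * ‖f‖ = s * ‖g‖ := by
        have a1 := norm_smul r f
        have a2 := norm_smul s g
        rw [h7, a2] at a1
        rw [Real.norm_eq_abs, Real.norm_eq_abs, abs_of_pos hs, abs_of_pos hr] at a1
        linarith
      have e2 : r * ‖f.comp T‖ = s * ‖g.comp T‖ := by
        have a1 := norm_smul r (f.comp T)
        have a2 := norm_smul s (g.comp T)
        rw [h5, a2] at a1
        rw [Real.norm_eq_abs, Real.norm_eq_abs, abs_of_pos hs, abs_of_pos hr] at a1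
        linarith
      have hnorm1 : r * (‖f‖ + ‖f.comp T‖) = s * (‖g‖ + ‖g.comp T‖) := by
        rw [mul_add, mul_add, e1, e2]
      rw [hf1, hg1, mul_one, mul_one] at hnorm1
      subst hnorm1
      exact hne (smul_right_injective _ hr.ne' h7)
  -- (iv) smoothness
  have hSM : ∀ x ∈ B + C, x ∉ interior (B + C) →
      ∃! f : StrongDual ℝ X, sSup (f '' (B + C)) = 1 ∧ f x = 1 := by
    intro x hxV hxint
    obtain ⟨f, hf⟩ :=
      geometric_hahn_banach_open_point hVconv.interior isOpen_interior hxint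
    obtain ⟨a0, ha0⟩ := hint
    have hf0 : f ≠ 0 := by
      intro h
      rw [h] at hf
      exact lt_irrefl (0:ℝ) (by simpa using hf a0 ha0)
    have hfxmax : ∀ w ∈ B + C, f w ≤ f x := by
      intro w hw
      by_contra hlt
      push_neg at hlt
      set d := f w - f x with hd
      have hdpos : 0 < d := sub_pos.2 hlt
      set M := |f w - f a0| + 1 with hM
      have hMpos : 0 < M := by positivity
      set t := min 1 (d / (2 * M)) with ht
      have ht0 : 0 < t := lt_min one_pos (by positivity)
      have ht1 : t ≤ 1 := min_le_left _ _
      have hmem := hVconv.combo_interior_closure_mem_interior ha0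
        (subset_closure hw) ht0 (by linarith : (0:ℝ) ≤ 1 - t) (by ring)
      have hlt2 := hf _ hmem
      rw [map_add, map_smul, map_smul, smul_eq_mul, smul_eq_mul] at hlt2
      have htM : t * M ≤ d / 2 := by
        have h9 : t ≤ d / (2 * M) := min_le_right _ _
        calc t * M ≤ (d / (2 * M)) * M := mul_le_mul_of_nonneg_right h9 hMpos.le
        _ = d / 2 := by field_simp
      have habs : f w - f a0 ≤ M := (le_abs_self _).trans (by rw [hM]; linarith)
      have h10 : t * (f w - f a0) ≤ t * M := mul_le_mul_of_nonneg_left habs ht0.le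
      nlinarith
    have hfx_eq : sSup (f '' (B + C)) = f x := by
      refine le_antisymm (csSup_le (hVne.image _) ?_) (le_csSup (hVbdd f) ⟨x, hxV, rfl⟩)
      rintro - ⟨w, hw, rfl⟩
      exact hfxmax w hw
    have hfx_eq2 : f x = ‖f‖ + ‖f.comp T‖ := by rw [← hfx_eq, hII f]
    have hfxpos : 0 < f x := by
      have h11 : 0 < ‖f‖ := norm_pos_iff.2 hf0
      have h12 : 0 ≤ ‖f.comp T‖ := norm_nonneg _
      linarith [hfx_eq2]
    set g : StrongDual ℝ X := (f x)⁻¹ • f with hg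
    have hgc : g.comp T = (f x)⁻¹ • (f.comp T) := by ext b; simp [hg]
    have hgV : sSup (g '' (B + C)) = 1 := by
      have n1 : ‖g‖ = (f x)⁻¹ * ‖f‖ := by
        rw [hg]
        have a1 := norm_smul ((f x)⁻¹) f
        rw [Real.norm_eq_abs, abs_of_pos (inv_pos.2 hfxpos)] at a1
        exact a1
      have n2 : ‖g.comp T‖ = (f x)⁻¹ * ‖f.comp T‖ := by
        rw [hgc]
        have a1 := norm_smul ((f x)⁻¹) (f.comp T)
        rw [Real.norm_eq_abs, abs_of_pos (inv_pos.2 hfxpos)] at a1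
        exact a1
      rw [hII g, n1, n2, ← mul_add, ← hfx_eq2, inv_mul_cancel₀ hfxpos.ne']
    have hgx : g x = 1 := by
      rw [hg]
      simp [inv_mul_cancel₀ hfxpos.ne']
    refine ⟨g, ⟨hgV, hgx⟩, ?_⟩
    rintro f' ⟨hf'V, hf'x⟩
    by_contra hne'
    have hlt3 := hSC f' g hf'V hgV hne'
    have h2x : (f' + g) x = 2 := by
      simp [ContinuousLinearMap.add_apply, hf'x, hgx]
      norm_num
    have h13 : (2:ℝ) ≤ sSup ((f' + g) '' (B + C)) :=
      h2x ▸ le_csSup (hVbdd _) ⟨x, hxV, rfl⟩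
    linarith
  show (IsClosed (B + C) ∧ Bornology.IsBounded (B + C) ∧ Balanced ℝ (B + C) ∧ Convex ℝ (B + C) ∧
      (interior (B + C)).Nonempty) ∧
    (∀ f : StrongDual ℝ X, sSup (f '' (B + C)) = ‖f‖ + ‖f.comp T‖) ∧
    (∀ f : StrongDual ℝ X,
      (∃ z ∈ B + C, ∀ w ∈ B + C, f w ≤ f z) ↔ (∃ x : X, ‖x‖ ≤ 1 ∧ f x = ‖f‖)) ∧
    ((∀ f g : StrongDual ℝ X, sSup (f '' (B + C)) = 1 → sSup (g '' (B + C)) = 1 → f ≠ g →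
        sSup ((f + g) '' (B + C)) < 2) ∧
      (∀ x ∈ B + C, x ∉ interior (B + C) →
        ∃! f : StrongDual ℝ X, sSup (f '' (B + C)) = 1 ∧ f x = 1))
  exact ⟨⟨hVclosed, hVbounded, hVbal, hVconv, hint⟩, hII, hIII, hSC, hSM⟩
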